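/- Let n ≥ 2 and let q_1, …, q_s be real quadratic forms on ℝ^{n+1}, with projective zero sets Z(q_i) = {[x] ∈ ℝP^n : q_i(x) = 0}, and let Γ = Z(q_1) ∪ ⋯ ∪ Z(q_s). Let H be the graph with vertex set I = {i ∈ {1,…,s} : Z(q_i) ≠ ∅} and an edge between distinct i, j ∈ I if and only if Z(q_i) ∩ Z(q_j) ≠ ∅. Then the number of connected components of the topological space Γ equals the number of connected components of the graph H. -/

import Mathlib

noncomputable section

/-- The quotient topology on a projectivization. -/
instance {K V : Type*} [DivisionRing K] [AddCommGroup V] [Module K V] [TopologicalSpace V] :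
    TopologicalSpace (Projectivization K V) :=
  instTopologicalSpaceQuotient

/-- The projective zero set `{[x] ∈ ℝPⁿ : q x = 0}` of a real quadratic form `q` on
`ℝ^{n+1}`. -/
def projZeroSet {n : ℕ} (q : QuadraticForm ℝ (Fin (n + 1) → ℝ)) :
    Set (Projectivization ℝ (Fin (n + 1) → ℝ)) :=
  {p | q p.rep = 0}

namespace QuadricAux

open Projectivization Set QuadraticMap

variable {n : ℕ}

lemma quadratic_continuous (q : QuadraticForm ℝ (Fin (n + 1) → ℝ)) : Continuous q := by
  have h : ∀ x, q x = (QuadraticMap.associatedHom ℝ q) x x :=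
    fun x => (QuadraticMap.associated_eq_self_apply ℝ q x).symm
  have hcont : Continuous fun x : Fin (n + 1) → ℝ => (QuadraticMap.associatedHom ℝ q) x x := by
    let L : (Fin (n + 1) → ℝ) →ₗ[ℝ] ((Fin (n + 1) → ℝ) →L[ℝ] ℝ) :=
      { toFun := fun x => LinearMap.toContinuousLinearMap ((QuadraticMap.associatedHom ℝ q) x)
        map_add' := by intro a b; ext v; simp
        map_smul' := by intro a b; ext v; simp }
    have hL : Continuous L := L.continuous_of_finiteDimensional
    have : Continuous fun x : Fin (n + 1) → ℝ => (L x) x :=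
      isBoundedBilinearMap_apply.continuous.comp (hL.prodMk continuous_id)
    simpa [L] using this
  simpa [← h] using hcont

lemma mem_projZeroSet_mk (q : QuadraticForm ℝ (Fin (n + 1) → ℝ)) {v : Fin (n + 1) → ℝ}
    (hv : v ≠ 0) : Projectivization.mk ℝ v hv ∈ projZeroSet q ↔ q v = 0 := by
  obtain ⟨a, ha⟩ := (mk_eq_mk_iff ℝ _ _ (rep_nonzero (Projectivization.mk ℝ v hv)) hv).1
    (mk_rep (Projectivization.mk ℝ v hv))
  have : q (Projectivization.mk ℝ v hv).rep = ((a : ℝ) * a) • q v := by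
    rw [← ha, Units.smul_def, QuadraticMap.map_smul]
  constructor
  · intro h
    have h2 : ((a : ℝ) * a) • q v = 0 := by rw [← this]; exact h
    have ha0 : (a : ℝ) ≠ 0 := a.ne_zero
    simpa [smul_eq_mul, mul_eq_zero, ha0] using h2
  · intro h
    show q (Projectivization.mk ℝ v hv).rep = 0
    rw [this, h, smul_zero]

lemma isClosed_projZeroSet (q : QuadraticForm ℝ (Fin (n + 1) → ℝ)) :
    IsClosed (projZeroSet q) := by
  letI : Setoid {v : Fin (n + 1) → ℝ // v ≠ 0} := projectivizationSetoid ℝ (Fin (n + 1) → ℝ)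
  have hq : Topology.IsQuotientMap (Quotient.mk' :
      {v : Fin (n + 1) → ℝ // v ≠ 0} → Projectivization ℝ (Fin (n + 1) → ℝ)) :=
    isQuotientMap_quotient_mk'
  refine (hq.isClosed_preimage (s := projZeroSet q)).1 ?_
  have : (Quotient.mk' ⁻¹' projZeroSet q : Set {v : Fin (n + 1) → ℝ // v ≠ 0}) =
      (fun v : {v : Fin (n + 1) → ℝ // v ≠ 0} => q ↑v) ⁻¹' {0} := by
    ext v
    have : (Quotient.mk' v : Projectivization ℝ (Fin (n + 1) → ℝ)) =
        Projectivization.mk ℝ ↑v v.2 := rfl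
    simp only [Set.mem_preimage, this, Set.mem_singleton_iff]
    exact mem_projZeroSet_mk q v.2
  rw [this]
  exact isClosed_singleton.preimage ((quadratic_continuous q).comp continuous_subtype_val)

lemma joinedIn_of_curve (q : QuadraticForm ℝ (Fin (n + 1) → ℝ)) (γ : ℝ → (Fin (n + 1) → ℝ))
    (hγ : Continuous γ) (hne : ∀ t ∈ Set.Icc (0:ℝ) 1, γ t ≠ 0)
    (hz : ∀ t ∈ Set.Icc (0:ℝ) 1, q (γ t) = 0) (h0 : γ 0 ≠ 0) (h1 : γ 1 ≠ 0) :
    JoinedIn (projZeroSet q) (Projectivization.mk ℝ (γ 0) h0)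
      (Projectivization.mk ℝ (γ 1) h1) := by
  have hf : Continuous fun t : unitInterval =>
      Projectivization.mk ℝ (γ t) (hne t t.2) := by
    have h1' : Continuous fun t : unitInterval => (⟨γ t, hne t t.2⟩ :
        {v : Fin (n + 1) → ℝ // v ≠ 0}) :=
      (hγ.comp continuous_subtype_val).subtype_mk _
    exact continuous_quotient_mk'.comp h1'
  refine ⟨⟨⟨fun t => Projectivization.mk ℝ (γ t) (hne t t.2), hf⟩, rfl, rfl⟩, ?_⟩
  intro t
  exact (mem_projZeroSet_mk q _).2 (hz t t.2)

lemma q_combo3 (q : QuadraticForm ℝ (Fin (n + 1) → ℝ)) (x y w : Fin (n + 1) → ℝ) (a b c : ℝ) :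
    q (a • x + b • y + c • w) = a*a*q x + b*b*q y + c*c*q w + a*b*polar q x y
      + a*c*polar q x w + b*c*polar q y w := by
  rw [QuadraticMap.map_add q (a • x + b • y) (c • w),
    QuadraticMap.map_add q (a • x) (b • y),
    QuadraticMap.polar_add_left, QuadraticMap.map_smul, QuadraticMap.map_smul,
    QuadraticMap.map_smul, QuadraticMap.polar_smul_left, QuadraticMap.polar_smul_right,
    QuadraticMap.polar_smul_left, QuadraticMap.polar_smul_right, QuadraticMap.polar_smul_left,
    QuadraticMap.polar_smul_right]
  simp only [smul_eq_mul]
  ring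

lemma q_combo2 (q : QuadraticForm ℝ (Fin (n + 1) → ℝ)) (x y : Fin (n + 1) → ℝ) (a b : ℝ) :
    q (a • x + b • y) = a*a*q x + b*b*q y + a*b*polar q x y := by
  have := q_combo3 q x y 0 a b 0
  simpa using this

lemma joinedIn_segment (q : QuadraticForm ℝ (Fin (n + 1) → ℝ)) {x y : Fin (n + 1) → ℝ}
    (hx : x ≠ 0) (hy : y ≠ 0) (hqx : q x = 0) (hqy : q y = 0)
    (hpol : polar q x y = 0) (hind : LinearIndependent ℝ ![x, y]) :
    JoinedIn (projZeroSet q) (Projectivization.mk ℝ x hx) (Projectivization.mk ℝ y hy) := by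
  set γ : ℝ → (Fin (n + 1) → ℝ) := fun t => (1 - t) • x + t • y with hγdef
  have hγ : Continuous γ := by fun_prop
  have hne : ∀ t ∈ Set.Icc (0:ℝ) 1, γ t ≠ 0 := by
    intro t _ h
    obtain ⟨h1, h2⟩ := LinearIndependent.pair_iff.1 hind (1 - t) t h
    rw [h2] at h1; norm_num at h1
  have hz : ∀ t ∈ Set.Icc (0:ℝ) 1, q (γ t) = 0 := by
    intro t _
    rw [hγdef]; simp only [q_combo2, hqx, hqy, hpol]; ring
  have h := joinedIn_of_curve q γ hγ hne hz (hne 0 ⟨le_refl _, zero_le_one⟩)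
    (hne 1 ⟨zero_le_one, le_refl _⟩)
  have e0 : Projectivization.mk ℝ (γ 0) (hne 0 ⟨le_refl _, zero_le_one⟩) =
      Projectivization.mk ℝ x hx := by
    rw [mk_eq_mk_iff']
    exact ⟨1, by simp [hγdef]⟩
  have e1 : Projectivization.mk ℝ (γ 1) (hne 1 ⟨zero_le_one, le_refl _⟩) =
      Projectivization.mk ℝ y hy := by
    rw [mk_eq_mk_iff']
    exact ⟨1, by simp [hγdef]⟩
  rwa [e0, e1] at h

lemma joinedIn_proj (hn : 2 ≤ n) (q : QuadraticForm ℝ (Fin (n + 1) → ℝ))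
    {x y : Fin (n + 1) → ℝ} (hx : x ≠ 0) (hy : y ≠ 0) (hqx : q x = 0) (hqy : q y = 0) :
    JoinedIn (projZeroSet q) (Projectivization.mk ℝ x hx) (Projectivization.mk ℝ y hy) := by
  by_cases heq : Projectivization.mk ℝ x hx = Projectivization.mk ℝ y hy
  · rw [heq]
    exact JoinedIn.refl ((mem_projZeroSet_mk q hy).2 hqy)
  -- x and y are linearly independent
  have hind : LinearIndependent ℝ ![x, y] := by
    rw [LinearIndependent.pair_iff' hx]
    intro a ha
    apply heq
    rw [mk_eq_mk_iff']
    have ha0 : a ≠ 0 := by rintro rfl; rw [zero_smul] at ha; exact hy ha.symm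
    exact ⟨a⁻¹, by rw [← ha, smul_smul, inv_mul_cancel₀ ha0, one_smul]⟩
  set β := polar q x y with hβdef
  by_cases hβ : β = 0
  · exact joinedIn_segment q hx hy hqx hqy hβ hind
  -- there is a vector outside the span of x and y
  obtain ⟨z, hz⟩ : ∃ z, z ∉ Submodule.span ℝ ({x, y} : Set (Fin (n + 1) → ℝ)) := by
    by_contra h
    push_neg at h
    have htop : Submodule.span ℝ ({x, y} : Set (Fin (n + 1) → ℝ)) = ⊤ :=
      eq_top_iff.2 fun z _ => h z
    classical
    have h2 := finrank_span_le_card (R := ℝ) ({x, y} : Set (Fin (n + 1) → ℝ))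
    rw [htop, finrank_top] at h2
    have h3 : ({x, y} : Set (Fin (n + 1) → ℝ)).toFinset.card ≤ 2 := by
      rw [Set.toFinset_insert, Set.toFinset_singleton]
      exact (Finset.card_insert_le _ _).trans (by simp)
    have h4 : Module.finrank ℝ (Fin (n + 1) → ℝ) = n + 1 := Module.finrank_fin_fun ℝ
    omega
  have hxmem : x ∈ Submodule.span ℝ ({x, y} : Set (Fin (n + 1) → ℝ)) :=
    Submodule.subset_span (by simp)
  have hymem : y ∈ Submodule.span ℝ ({x, y} : Set (Fin (n + 1) → ℝ)) :=
    Submodule.subset_span (by simp)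
  set w : Fin (n + 1) → ℝ := z - (polar q y z / β) • x - (polar q x z / β) • y with hwdef
  have hwspan : w ∉ Submodule.span ℝ ({x, y} : Set (Fin (n + 1) → ℝ)) := by
    intro hw
    apply hz
    have hz' : z = w + ((polar q y z / β) • x + (polar q x z / β) • y) := by
      rw [hwdef]; abel
    rw [hz']
    exact Submodule.add_mem _ hw (Submodule.add_mem _
      (Submodule.smul_mem _ _ hxmem) (Submodule.smul_mem _ _ hymem))
  have hw0 : w ≠ 0 := fun h => hwspan (h ▸ Submodule.zero_mem _)
  have hpxx : polar q x x = 0 := by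
    rw [QuadraticMap.polar_self, hqx]; simp
  have hpyy : polar q y y = 0 := by
    rw [QuadraticMap.polar_self, hqy]; simp
  have hpxw : polar q x w = 0 := by
    rw [hwdef, QuadraticMap.polar_sub_right, QuadraticMap.polar_sub_right,
      QuadraticMap.polar_smul_right, QuadraticMap.polar_smul_right, hpxx, ← hβdef]
    simp only [smul_eq_mul]
    field_simp
    ring
  have hpyw : polar q y w = 0 := by
    rw [hwdef, QuadraticMap.polar_sub_right, QuadraticMap.polar_sub_right,
      QuadraticMap.polar_smul_right, QuadraticMap.polar_smul_right, hpyy,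
      QuadraticMap.polar_comm _ y x, ← hβdef]
    simp only [smul_eq_mul]
    field_simp
    ring
  have hindxw : LinearIndependent ℝ ![x, w] := by
    rw [LinearIndependent.pair_iff' hx]
    intro a ha
    exact hwspan (ha ▸ Submodule.smul_mem _ _ hxmem)
  have hindyw : LinearIndependent ℝ ![y, w] := by
    rw [LinearIndependent.pair_iff' hy]
    intro a ha
    exact hwspan (ha ▸ Submodule.smul_mem _ _ hymem)
  by_cases hd : q w = 0
  · exact (joinedIn_segment q hx hw0 hqx hd hpxw hindxw).trans
      (joinedIn_segment q hy hw0 hqy hd hpyw hindyw).symm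
  -- the conic path
  set d := q w with hddef
  set ε : ℝ := if 0 < β * d then -1 else 1 with hεdef
  have hε : ε = -1 ∨ ε = 1 := by rw [hεdef]; split_ifs <;> simp
  have hε0 : ε ≠ 0 := by rcases hε with h | h <;> rw [h] <;> norm_num
  set K : ℝ := -(ε * β / d) with hKdef
  have hK : 0 ≤ K := by
    rw [hKdef, hεdef]
    split_ifs with h
    · have : (-1 : ℝ) * β / d = -((β * d) / (d * d)) := by field_simp
      rw [this, neg_neg]
      exact div_nonneg h.le (mul_self_nonneg d)
    · have : (1 : ℝ) * β / d = (β * d) / (d * d) := by field_simp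
      rw [this]
      rw [neg_nonneg]
      exact div_nonpos_of_nonpos_of_nonneg (not_lt.1 h) (mul_self_nonneg d)
  set γ : ℝ → (Fin (n + 1) → ℝ) :=
    fun t => (1 - t) • x + (ε * t) • y + Real.sqrt (t * (1 - t) * K) • w with hγdef
  have hγ : Continuous γ := by
    apply Continuous.add
    apply Continuous.add
    · fun_prop
    · fun_prop
    · exact (Real.continuous_sqrt.comp (by fun_prop)).smul continuous_const
  have hne : ∀ t ∈ Set.Icc (0:ℝ) 1, γ t ≠ 0 := by
    rintro t ⟨ht0, ht1⟩ h
    simp only [hγdef] at h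
    set c := Real.sqrt (t * (1 - t) * K) with hcdef
    by_cases hc : c = 0
    · rw [hc, zero_smul, add_zero] at h
      obtain ⟨h1, h2⟩ := LinearIndependent.pair_iff.1 hind (1 - t) (ε * t) h
      have ht : t = 1 := by linarith [sub_eq_zero.1 h1]
      rw [ht, mul_one] at h2
      exact hε0 h2
    · apply hwspan
      rw [Submodule.mem_span_pair]
      refine ⟨-(c⁻¹ * (1 - t)), -(c⁻¹ * (ε * t)), ?_⟩
      have h3 := congrArg (fun v => c⁻¹ • v) h
      simp only [smul_add, smul_smul, smul_zero] at h3
      rw [inv_mul_cancel₀ hc, one_smul] at h3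
      have h4 : -((c⁻¹ * (1 - t)) • x + (c⁻¹ * (ε * t)) • y) = w := by
        rw [add_eq_zero_iff_neg_eq] at h3
        exact h3
      rw [← h4]
      module
  have hzq : ∀ t ∈ Set.Icc (0:ℝ) 1, q (γ t) = 0 := by
    rintro t ⟨ht0, ht1⟩
    rw [hγdef]
    rw [q_combo3, hqx, hqy, hpxw, hpyw, ← hβdef, ← hddef]
    have hsq : Real.sqrt (t * (1 - t) * K) * Real.sqrt (t * (1 - t) * K) = t * (1 - t) * K :=
      Real.mul_self_sqrt (mul_nonneg (mul_nonneg ht0 (by linarith)) hK)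
    rw [hsq, hKdef]
    field_simp
    ring
  have h := joinedIn_of_curve q γ hγ hne hzq (hne 0 ⟨le_refl _, zero_le_one⟩)
    (hne 1 ⟨zero_le_one, le_refl _⟩)
  have e0 : Projectivization.mk ℝ (γ 0) (hne 0 ⟨le_refl _, zero_le_one⟩) =
      Projectivization.mk ℝ x hx := by
    rw [mk_eq_mk_iff']
    refine ⟨1, ?_⟩
    rw [one_smul, hγdef]
    norm_num
  have e1 : Projectivization.mk ℝ (γ 1) (hne 1 ⟨zero_le_one, le_refl _⟩) =
      Projectivization.mk ℝ y hy := by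
    rw [mk_eq_mk_iff']
    refine ⟨ε, ?_⟩
    rw [hγdef]
    norm_num
  rwa [e0, e1] at h

lemma isPreconnected_projZeroSet (hn : 2 ≤ n) (q : QuadraticForm ℝ (Fin (n + 1) → ℝ)) :
    IsPreconnected (projZeroSet q) := by
  rcases Set.eq_empty_or_nonempty (projZeroSet q) with h | ⟨p, hp⟩
  · rw [h]; exact isPreconnected_empty
  · apply IsConnected.isPreconnected
    apply IsPathConnected.isConnected
    refine ⟨p, hp, fun {y} hy => ?_⟩
    have h1 : q p.rep = 0 := hp
    have h2 : q y.rep = 0 := hy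
    have h3 := joinedIn_proj hn q (rep_nonzero p) (rep_nonzero y) h1 h2
    rwa [mk_rep, mk_rep] at h3

end QuadricAux


open QuadricAux Projectivization Set

theorem quadric_arrangement_components_eq_graph_components (n : ℕ) (hn : 2 ≤ n)
    (s : ℕ) (q : Fin s → QuadraticForm ℝ (Fin (n + 1) → ℝ)) :
    Nat.card (ConnectedComponents
        ((⋃ i, projZeroSet (q i)) : Set (Projectivization ℝ (Fin (n + 1) → ℝ)))) =
      Nat.card (SimpleGraph.fromRel
        (fun i j : {i : Fin s // (projZeroSet (q i)).Nonempty} =>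
          (projZeroSet (q i.1) ∩ projZeroSet (q j.1)).Nonempty)).ConnectedComponent := by
  classical
  set Γ : Set (Projectivization ℝ (Fin (n + 1) → ℝ)) := ⋃ i, projZeroSet (q i) with hΓ
  set G := SimpleGraph.fromRel
    (fun i j : {i : Fin s // (projZeroSet (q i)).Nonempty} =>
      (projZeroSet (q i.1) ∩ projZeroSet (q j.1)).Nonempty) with hG
  haveI : Finite G.ConnectedComponent :=
    Finite.of_surjective (Quot.mk G.Reachable) Quot.mk_surjective
  -- preconnectedness of the pieces inside Γ
  have hsubΓ : ∀ i : Fin s, projZeroSet (q i) ⊆ Γ := by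
    intro i; rw [hΓ]; exact Set.subset_iUnion (fun j => projZeroSet (q j)) i
  have hsub : ∀ i : Fin s, IsPreconnected ((Subtype.val ⁻¹' projZeroSet (q i)) : Set ↥Γ) := by
    intro i
    rw [← Topology.IsInducing.subtypeVal.isPreconnected_image]
    have himg : Subtype.val '' ((Subtype.val ⁻¹' projZeroSet (q i)) : Set ↥Γ) =
        projZeroSet (q i) := by
      rw [Set.image_preimage_eq_inter_range, Subtype.range_val]
      exact Set.inter_eq_left.2 (hsubΓ i)
    rw [himg]
    exact isPreconnected_projZeroSet hn _
  have same_comp : ∀ (i : Fin s) (p p' : ↥Γ), ↑p ∈ projZeroSet (q i) →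
      ↑p' ∈ projZeroSet (q i) →
      (ConnectedComponents.mk p = ConnectedComponents.mk p') := by
    intro i p p' hp hp'
    rw [ConnectedComponents.coe_eq_coe]
    exact connectedComponent_eq ((hsub i).subset_connectedComponent hp hp')
  -- the map from graph components to topological components
  let pt : {i : Fin s // (projZeroSet (q i)).Nonempty} → ↥Γ :=
    fun v => ⟨v.2.choose, hsubΓ v.1 v.2.choose_spec⟩
  have hpt : ∀ v, ↑(pt v) ∈ projZeroSet (q v.1) := fun v => v.2.choose_spec
  let f : {i : Fin s // (projZeroSet (q i)).Nonempty} → ConnectedComponents ↥Γ :=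
    fun v => ConnectedComponents.mk (pt v)
  have hf : ∀ v w, G.Adj v w → f v = f w := by
    intro v w hvw
    rw [hG, SimpleGraph.fromRel_adj] at hvw
    obtain ⟨hne', h'⟩ := hvw
    obtain ⟨c, hc1, hc2⟩ : (projZeroSet (q v.1) ∩ projZeroSet (q w.1)).Nonempty := by
      rcases h' with h' | h'
      · exact h'
      · obtain ⟨c, hc⟩ := h'
        exact ⟨c, hc.2, hc.1⟩
    have hcΓ : c ∈ Γ := hsubΓ v.1 hc1
    calc f v = ConnectedComponents.mk (⟨c, hcΓ⟩ : ↥Γ) := same_comp v.1 _ _ (hpt v) hc1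
      _ = f w := same_comp w.1 _ _ hc2 (hpt w)
  have hreach : ∀ v w, G.Reachable v w → f v = f w := by
    intro v w h
    obtain ⟨p⟩ := h
    induction p with
    | nil => rfl
    | cons h p ih => exact (hf _ _ h).trans ih
  let F : G.ConnectedComponent → ConnectedComponents ↥Γ :=
    Quot.lift f (fun v w h => hreach v w h)
  -- clopen pieces indexed by graph components
  let S : G.ConnectedComponent → Set ↥Γ := fun C =>
    Subtype.val ⁻¹' (⋃ v ∈ {v | G.connectedComponentMk v = C}, projZeroSet (q v.1))
  have hS_closed : ∀ C, IsClosed (S C) := fun C =>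
    ((Set.toFinite _).isClosed_biUnion (fun v _ => isClosed_projZeroSet _)).preimage
      continuous_subtype_val
  have hS_mem : ∀ (v) (p : ↥Γ), ↑p ∈ projZeroSet (q v.1) →
      p ∈ S (G.connectedComponentMk v) := by
    intro v p hp
    simp only [S, Set.mem_preimage, Set.mem_iUnion]
    exact ⟨v, rfl, hp⟩
  have hS_disj : ∀ C C' (p : ↥Γ), p ∈ S C → p ∈ S C' → C = C' := by
    intro C C' p hp hp'
    simp only [S, Set.mem_preimage, Set.mem_iUnion] at hp hp'
    obtain ⟨v, hv, hpv⟩ := hp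
    obtain ⟨w, hw, hpw⟩ := hp'
    rw [← hv, ← hw]
    by_cases hvw : v = w
    · rw [hvw]
    · apply SimpleGraph.ConnectedComponent.sound
      apply SimpleGraph.Adj.reachable
      rw [hG, SimpleGraph.fromRel_adj]
      exact ⟨hvw, Or.inl ⟨↑p, hpv, hpw⟩⟩
  have hS_compl : ∀ C, (S C)ᶜ = ⋃ C' ∈ {C' | C' ≠ C}, S C' := by
    intro C
    ext p
    simp only [Set.mem_compl_iff, Set.mem_iUnion, Set.mem_setOf_eq, exists_prop]
    constructor
    · intro hp
      obtain ⟨k, hk⟩ := Set.mem_iUnion.1 p.2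
      have hv : p ∈ S (G.connectedComponentMk ⟨k, ⟨↑p, hk⟩⟩) :=
        hS_mem ⟨k, ⟨↑p, hk⟩⟩ p hk
      exact ⟨_, fun h => hp (h ▸ hv), hv⟩
    · rintro ⟨C', hne, hp'⟩ hp
      exact hne (hS_disj C' C p hp' hp)
  have hS_clopen : ∀ C, IsClopen (S C) := by
    intro C
    refine ⟨hS_closed C, ?_⟩
    rw [← isClosed_compl_iff, hS_compl]
    exact (Set.toFinite _).isClosed_biUnion fun C' _ => hS_closed C'
  -- F is bijective
  have hFsurj : Function.Surjective F := by
    intro c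
    obtain ⟨p, rfl⟩ := ConnectedComponents.surjective_coe c
    obtain ⟨k, hk⟩ := Set.mem_iUnion.1 p.2
    refine ⟨Quot.mk _ ⟨k, ⟨↑p, hk⟩⟩, ?_⟩
    exact same_comp k (pt ⟨k, ⟨↑p, hk⟩⟩) p (hpt ⟨k, ⟨↑p, hk⟩⟩) hk
  have hFinj : Function.Injective F := by
    intro c c' h
    obtain ⟨v, rfl⟩ := Quot.exists_rep c
    obtain ⟨w, rfl⟩ := Quot.exists_rep c'
    have h' : ConnectedComponents.mk (pt v) = ConnectedComponents.mk (pt w) := h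
    have h2 : connectedComponent (pt v) = connectedComponent (pt w) :=
      ConnectedComponents.coe_eq_coe.1 h'
    have h3 : pt w ∈ connectedComponent (pt v) := h2 ▸ mem_connectedComponent
    have h4 : connectedComponent (pt v) ⊆ S (G.connectedComponentMk v) :=
      (hS_clopen _).connectedComponent_subset (hS_mem v (pt v) (hpt v))
    exact hS_disj _ _ (pt w) (h4 h3) (hS_mem w (pt w) (hpt w))
  exact Nat.card_congr (Equiv.ofBijective F ⟨hFinj, hFsurj⟩).symm
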